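/- σ-finiteness of the Gaussian improper mixture marginal: for every integer n ≥ 2 and every real p with n + p > 2, the measure on ℝⁿ given by Lebesgue measure with density y ↦ Λ_{n,p}(y) is σ-finite, where Λ_{n,p}(y) = ∫_0^∞ ∫_{−∞}^∞ (2πσ²)^{−n/2} exp(−∑_{i=1}^n (y_i − θ)²/(2σ²)) σ^{−p} dθ dσ (with values in [0, ∞]). -/

import Mathlib

open MeasureTheory
open scoped ENNReal

/-- The Gaussian improper-mixture intensity
`Λ_{n,p}(y) = ∫₀^∞ ∫_{-∞}^∞ (2πσ²)^{-n/2} exp(-∑ᵢ(yᵢ-θ)²/(2σ²)) σ^{-p} dθ dσ`,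
with values in `[0, ∞]`. -/
noncomputable def gaussIntensity (n : ℕ) (p : ℝ) (y : Fin n → ℝ) : ℝ≥0∞ :=
  ∫⁻ σ in Set.Ioi (0 : ℝ), ∫⁻ θ : ℝ,
    ENNReal.ofReal ((2 * Real.pi * σ ^ 2) ^ (-(n : ℝ) / 2) *
      Real.exp (-(∑ i, (y i - θ) ^ 2) / (2 * σ ^ 2)) * σ ^ (-p))

open Real

/-- Integrability of `σ ↦ σ^q · exp(-c/σ²)` on `(0,∞)` for `q < -1`, `c > 0`. -/
lemma gaussAux_integrable {q c : ℝ} (hq : q < -1) (hc : 0 < c) :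
    IntegrableOn (fun σ : ℝ => σ ^ q * Real.exp (-c / σ ^ 2)) (Set.Ioi 0) := by
  have hmeas : Measurable fun σ : ℝ => σ ^ q * Real.exp (-c / σ ^ 2) := by
    fun_prop
  rw [← Set.Ioc_union_Ioi_eq_Ioi (zero_le_one' ℝ)]
  apply IntegrableOn.union
  · set k : ℕ := ⌈-q⌉₊ with hkdef
    have hk : -q ≤ (k : ℝ) := Nat.le_ceil _
    have hbase : IntegrableOn (fun σ : ℝ => σ ^ (q + 2 * (k : ℝ))) (Set.Ioc 0 1) := by
      have h1 : (-1 : ℝ) < q + 2 * k := by nlinarith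
      have := intervalIntegral.intervalIntegrable_rpow' (a := 0) (b := 1) h1
      rwa [intervalIntegrable_iff_integrableOn_Ioc_of_le zero_le_one] at this
    refine ((hbase.const_mul ((k.factorial : ℝ) / c ^ k)).mono'
      hmeas.aestronglyMeasurable.restrict ?_)
    filter_upwards [ae_restrict_mem measurableSet_Ioc] with σ hσ
    obtain ⟨hσ0, hσ1⟩ := hσ
    have hx : (0 : ℝ) < c / σ ^ 2 := by positivity
    have hexp : Real.exp (-c / σ ^ 2) ≤ (k.factorial : ℝ) / c ^ k * σ ^ (2 * k) := by
      have h1 : (c / σ ^ 2) ^ k / (k.factorial : ℝ) ≤ Real.exp (c / σ ^ 2) :=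
        Real.pow_div_factorial_le_exp (c / σ ^ 2) hx.le k
      have h2 : Real.exp (-c / σ ^ 2) = (Real.exp (c / σ ^ 2))⁻¹ := by
        rw [← Real.exp_neg]; ring_nf
      rw [h2]
      have h3 : (0 : ℝ) < (c / σ ^ 2) ^ k / (k.factorial : ℝ) := by positivity
      calc (Real.exp (c / σ ^ 2))⁻¹ ≤ ((c / σ ^ 2) ^ k / (k.factorial : ℝ))⁻¹ :=
            inv_anti₀ h3 h1
        _ = (k.factorial : ℝ) / c ^ k * σ ^ (2 * k) := by
            rw [div_pow, pow_mul]
            field_simp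
    rw [Real.norm_eq_abs, abs_of_nonneg (by positivity)]
    calc σ ^ q * Real.exp (-c / σ ^ 2)
        ≤ σ ^ q * ((k.factorial : ℝ) / c ^ k * σ ^ (2 * k)) :=
          mul_le_mul_of_nonneg_left hexp (Real.rpow_nonneg hσ0.le q)
      _ = (k.factorial : ℝ) / c ^ k * σ ^ (q + 2 * (k : ℝ)) := by
          rw [Real.rpow_add hσ0, ← Real.rpow_natCast σ (2 * k)]
          push_cast
          ring
  · refine ((integrableOn_Ioi_rpow_of_lt hq one_pos).mono'
      hmeas.aestronglyMeasurable.restrict ?_)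
    filter_upwards [ae_restrict_mem measurableSet_Ioi] with σ hσ
    have hσ0 : (0 : ℝ) < σ := lt_trans one_pos hσ
    rw [Real.norm_eq_abs, abs_of_nonneg (by positivity)]
    calc σ ^ q * Real.exp (-c / σ ^ 2) ≤ σ ^ q * 1 :=
          mul_le_mul_of_nonneg_left
            (Real.exp_le_one_iff.mpr
              (div_nonpos_of_nonpos_of_nonneg (by linarith) (by positivity)))
            (Real.rpow_nonneg hσ0.le q)
      _ = σ ^ q := mul_one _

/-- The shifted Gaussian integral, in `lintegral` form. -/
lemma gaussAux_inner (F m a : ℝ) (hF : 0 ≤ F) (hm : 0 < m) :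
    (∫⁻ θ : ℝ, ENNReal.ofReal (F * Real.exp (-m * (θ - a) ^ 2)))
      = ENNReal.ofReal (F * √(π / m)) := by
  have htrans : (∫⁻ θ : ℝ, ENNReal.ofReal (Real.exp (-m * (θ - a) ^ 2)))
      = ∫⁻ x : ℝ, ENNReal.ofReal (Real.exp (-m * x ^ 2)) := by
    calc (∫⁻ θ : ℝ, ENNReal.ofReal (Real.exp (-m * (θ - a) ^ 2)))
        = ∫⁻ θ : ℝ, ENNReal.ofReal (Real.exp (-m * (θ + -a) ^ 2)) := by
          simp only [sub_eq_add_neg]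
      _ = ∫⁻ x : ℝ, ENNReal.ofReal (Real.exp (-m * x ^ 2)) :=
          lintegral_add_right_eq_self (μ := (volume : Measure ℝ))
            (fun x : ℝ => ENNReal.ofReal (Real.exp (-m * x ^ 2))) (-a)
  have hval : (∫⁻ x : ℝ, ENNReal.ofReal (Real.exp (-m * x ^ 2)))
      = ENNReal.ofReal (√(π / m)) := by
    rw [← ofReal_integral_eq_lintegral_ofReal (integrable_exp_neg_mul_sq hm)
      (Filter.Eventually.of_forall fun x => (Real.exp_pos _).le), integral_gaussian]
  calc (∫⁻ θ : ℝ, ENNReal.ofReal (F * Real.exp (-m * (θ - a) ^ 2)))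
      = ∫⁻ θ : ℝ, ENNReal.ofReal F * ENNReal.ofReal (Real.exp (-m * (θ - a) ^ 2)) := by
        simp_rw [ENNReal.ofReal_mul hF]
    _ = ENNReal.ofReal F * ∫⁻ θ : ℝ, ENNReal.ofReal (Real.exp (-m * (θ - a) ^ 2)) :=
        lintegral_const_mul' _ _ ENNReal.ofReal_ne_top
    _ = ENNReal.ofReal F * ENNReal.ofReal (√(π / m)) := by rw [htrans, hval]
    _ = ENNReal.ofReal (F * √(π / m)) := (ENNReal.ofReal_mul hF).symm

/-- The intensity is finite at every point off the diagonal. -/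
lemma gaussIntensity_ne_top (n : ℕ) (p : ℝ) (hp : 2 < (n : ℝ) + p)
    {y : Fin n → ℝ} {i0 i1 : Fin n} (hne : i0 ≠ i1) (hy : y i0 ≠ y i1) :
    gaussIntensity n p y ≠ ∞ := by
  set a := y i0 with ha
  set b := y i1 with hb
  set c := (a - b) ^ 2 with hcdef
  have hc : 0 < c := by
    have := sub_ne_zero.mpr hy
    positivity
  set q : ℝ := 1 - n - p with hqdef
  have hq : q < -1 := by rw [hqdef]; linarith
  set C : ℝ := (2 * π) ^ (-(n : ℝ) / 2) * (√π * 2) with hCdef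
  have hC : 0 ≤ C := by positivity
  have inner_le : ∀ σ ∈ Set.Ioi (0 : ℝ),
      (∫⁻ θ : ℝ, ENNReal.ofReal ((2 * Real.pi * σ ^ 2) ^ (-(n : ℝ) / 2) *
        Real.exp (-(∑ i, (y i - θ) ^ 2) / (2 * σ ^ 2)) * σ ^ (-p)))
      ≤ ENNReal.ofReal (C * (σ ^ q * Real.exp (-(c / 8) / σ ^ 2))) := by
    intro σ hσ
    have hσ0 : (0 : ℝ) < σ := hσ
    set m : ℝ := (4 * σ ^ 2)⁻¹ with hmdef
    have hm : 0 < m := by positivity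
    set F : ℝ := (2 * Real.pi * σ ^ 2) ^ (-(n : ℝ) / 2) * σ ^ (-p) *
      Real.exp (-c / (8 * σ ^ 2)) with hFdef
    have hF : 0 ≤ F := by positivity
    have hpt : ∀ θ : ℝ, (2 * Real.pi * σ ^ 2) ^ (-(n : ℝ) / 2) *
        Real.exp (-(∑ i, (y i - θ) ^ 2) / (2 * σ ^ 2)) * σ ^ (-p)
        ≤ F * Real.exp (-m * (θ - a) ^ 2) := by
      intro θ
      have hsum : (y i0 - θ) ^ 2 + (y i1 - θ) ^ 2 ≤ ∑ i, (y i - θ) ^ 2 := by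
        have := Finset.sum_le_sum_of_subset_of_nonneg
          (Finset.subset_univ ({i0, i1} : Finset (Fin n)))
          (fun i _ _ => sq_nonneg (y i - θ))
        rwa [Finset.sum_pair hne] at this
      have hS : c + 2 * (θ - a) ^ 2 ≤ 4 * ∑ i, (y i - θ) ^ 2 := by
        nlinarith [hsum, sq_nonneg ((a - θ) + (b - θ))]
      have hexp : -(∑ i, (y i - θ) ^ 2) / (2 * σ ^ 2)
          ≤ -c / (8 * σ ^ 2) + -m * (θ - a) ^ 2 := by
        have hkey : -c / (8 * σ ^ 2) + -m * (θ - a) ^ 2 -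
            (-(∑ i, (y i - θ) ^ 2) / (2 * σ ^ 2))
            = (4 * (∑ i, (y i - θ) ^ 2) - (c + 2 * (θ - a) ^ 2)) / (8 * σ ^ 2) := by
          rw [hmdef]
          field_simp
          ring
        nlinarith [div_nonneg
          (by linarith : (0:ℝ) ≤ 4 * (∑ i, (y i - θ) ^ 2) - (c + 2 * (θ - a) ^ 2))
          (by positivity : (0:ℝ) ≤ 8 * σ ^ 2)]
      calc (2 * Real.pi * σ ^ 2) ^ (-(n : ℝ) / 2) *
            Real.exp (-(∑ i, (y i - θ) ^ 2) / (2 * σ ^ 2)) * σ ^ (-p)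
          ≤ (2 * Real.pi * σ ^ 2) ^ (-(n : ℝ) / 2) *
            Real.exp (-c / (8 * σ ^ 2) + -m * (θ - a) ^ 2) * σ ^ (-p) := by
            have h0 := Real.exp_le_exp.mpr hexp
            have h1 : (0:ℝ) ≤ (2 * Real.pi * σ ^ 2) ^ (-(n : ℝ) / 2) := by positivity
            have h2 : (0:ℝ) ≤ σ ^ (-p) := by positivity
            exact mul_le_mul_of_nonneg_right (mul_le_mul_of_nonneg_left h0 h1) h2
        _ = F * Real.exp (-m * (θ - a) ^ 2) := by
            rw [hFdef, Real.exp_add]; ring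
    have heq : F * √(π / m) = C * (σ ^ q * Real.exp (-(c / 8) / σ ^ 2)) := by
      have h2 : (2 * Real.pi * σ ^ 2) ^ (-(n : ℝ) / 2)
          = (2 * π) ^ (-(n : ℝ) / 2) * σ ^ (-(n : ℝ)) := by
        rw [show 2 * Real.pi * σ ^ 2 = (2 * π) * σ ^ 2 by ring,
          Real.mul_rpow (by positivity) (by positivity)]
        congr 1
        rw [← Real.rpow_natCast σ 2, ← Real.rpow_mul hσ0.le]
        congr 1
        push_cast
        ring
      have h3 : √(π / m) = √π * (2 * σ) := by
        rw [hmdef, div_eq_mul_inv, inv_inv, show π * (4 * σ ^ 2) = π * (2 * σ) ^ 2 by ring,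
          Real.sqrt_mul pi_pos.le, Real.sqrt_sq (by linarith)]
      have h4 : σ ^ q = σ ^ (-(n : ℝ)) * σ ^ (-p) * σ := by
        rw [hqdef, show (1 : ℝ) - n - p = -(n : ℝ) + (-p + 1) by ring,
          Real.rpow_add hσ0, Real.rpow_add hσ0, Real.rpow_one]
        ring
      have h5 : -c / (8 * σ ^ 2) = -(c / 8) / σ ^ 2 := by ring
      rw [hFdef, hCdef, h2, h3, h4, h5]
      ring
    calc (∫⁻ θ : ℝ, ENNReal.ofReal ((2 * Real.pi * σ ^ 2) ^ (-(n : ℝ) / 2) *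
          Real.exp (-(∑ i, (y i - θ) ^ 2) / (2 * σ ^ 2)) * σ ^ (-p)))
        ≤ ∫⁻ θ : ℝ, ENNReal.ofReal (F * Real.exp (-m * (θ - a) ^ 2)) :=
          lintegral_mono fun θ => ENNReal.ofReal_le_ofReal (hpt θ)
      _ = ENNReal.ofReal (F * √(π / m)) := gaussAux_inner F m a hF hm
      _ = ENNReal.ofReal (C * (σ ^ q * Real.exp (-(c / 8) / σ ^ 2))) := by rw [heq]
  have houter : gaussIntensity n p y
      ≤ ∫⁻ σ in Set.Ioi (0 : ℝ),
          ENNReal.ofReal (C * (σ ^ q * Real.exp (-(c / 8) / σ ^ 2))) := by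
    refine setLIntegral_mono ?_ inner_le
    apply Measurable.ennreal_ofReal
    fun_prop
  refine ne_top_of_le_ne_top ?_ houter
  have hint : IntegrableOn (fun σ : ℝ => C * (σ ^ q * Real.exp (-(c / 8) / σ ^ 2)))
      (Set.Ioi 0) := (gaussAux_integrable hq (by positivity : (0:ℝ) < c / 8)).const_mul C
  exact hint.lintegral_lt_top.ne

/-- The diagonal-type set `{y | y i0 = y i1}` is Lebesgue-null. -/
lemma gaussAux_diag_null (n : ℕ) (i0 i1 : Fin n) (hne : i0 ≠ i1) :
    (volume : Measure (Fin n → ℝ)) {y | y i0 = y i1} = 0 := by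
  set L : (Fin n → ℝ) →ₗ[ℝ] ℝ :=
    (LinearMap.proj i0 : (Fin n → ℝ) →ₗ[ℝ] ℝ) - (LinearMap.proj i1 : (Fin n → ℝ) →ₗ[ℝ] ℝ)
    with hL
  have hset : {y : Fin n → ℝ | y i0 = y i1} = (LinearMap.ker L : Set (Fin n → ℝ)) := by
    ext y
    simp [hL, LinearMap.mem_ker, sub_eq_zero]
  rw [hset]
  refine Measure.addHaar_submodule _ _ ?_
  intro h
  have hL0 : L = 0 := LinearMap.ker_eq_top.mp h
  have : L (Pi.single i0 1) = 1 := by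
    simp [hL, Pi.single_eq_same, Pi.single_eq_of_ne (Ne.symm hne)]
  rw [hL0] at this
  simp at this

/-- σ-finiteness of the Gaussian improper-mixture marginal: for `n ≥ 2` and
`n + p > 2`, Lebesgue measure on `ℝⁿ` with density `Λ_{n,p}` is σ-finite. -/
theorem gauss_marginal_sigmaFinite (n : ℕ) (hn : 2 ≤ n) (p : ℝ)
    (hp : 2 < (n : ℝ) + p) :
    SigmaFinite ((volume : Measure (Fin n → ℝ)).withDensity (gaussIntensity n p)) := by
  have h01 : (⟨0, by omega⟩ : Fin n) ≠ ⟨1, by omega⟩ := by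
    intro h
    exact absurd (congrArg Fin.val h) (by norm_num)
  apply SigmaFinite.withDensity_of_ne_top
  rw [ae_iff]
  refine measure_mono_null ?_ (gaussAux_diag_null n ⟨0, by omega⟩ ⟨1, by omega⟩ h01)
  intro y hy
  simp only [Set.mem_setOf_eq, not_not] at hy
  by_contra hcon
  exact gaussIntensity_ne_top n p hp h01 hcon hy
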